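/- Let G = (V, E) be a finite simple graph and s \notin V a new vertex. Form the weighted complete graph G' on V \cup \{s\} where edges of E have weight 1, edges from s to each v \in V have weight \alpha = 1 - 1/(2|V|^2), and all other pairs have weight 0. Then for any X \subseteq V that is a clique of size n \ge 1 in G, the density d(X, X \cup \{s\}) = (C(n,2) + \alpha n)/(C(n,2) + n) = (n - 1 + 2\alpha)/(n + 1), and this density is strictly increasing in n over cliques. -/

import Mathlib

/-- The set of (cross) edges with one endpoint in `X` and the other in `W`,
as unordered pairs of distinct vertices. -/
def crossE {V : Type*} [DecidableEq V] (X W : Finset V) : Finset (Sym2 V) :=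
  ((X ×ˢ W).filter fun p => p.1 ≠ p.2).image (Function.uncurry Sym2.mk)

/-- Total weight of the cross edges from `X` to `W`. -/
noncomputable def wsum {V : Type*} [DecidableEq V] (w : Sym2 V → ℝ)
    (X W : Finset V) : ℝ :=
  ∑ e ∈ crossE X W, w e

/-- Density of the cross edges from `X` to `W`. -/
noncomputable def dens {V : Type*} [DecidableEq V] (w : Sym2 V → ℝ)
    (X W : Finset V) : ℝ :=
  wsum w X W / ((crossE X W).card : ℝ)

section Aux
variable {V : Type*} [DecidableEq V]

lemma crossE_eq (X : Finset V) :
    crossE (X.image some) (X.image some ∪ {none}) =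
      (X.image some).offDiag.image (Function.uncurry Sym2.mk) ∪
        X.image (fun x => s(some x, (none : Option V))) := by
  rw [crossE, Finset.product_union, Finset.filter_union, Finset.image_union]
  congr 1
  · congr 1; ext p; simp [Finset.mem_offDiag, and_assoc]
  · ext e
    simp only [Finset.mem_image, Finset.mem_filter, Finset.mem_product,
      Finset.mem_singleton]
    constructor
    · rintro ⟨⟨a, b⟩, ⟨⟨⟨x, hx, rfl⟩, hb⟩, -⟩, rfl⟩
      subst hb
      exact ⟨x, hx, rfl⟩
    · rintro ⟨x, hx, rfl⟩
      exact ⟨(some x, none), ⟨⟨⟨x, hx, rfl⟩, rfl⟩, by simp⟩, rfl⟩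

lemma disj_eq (X : Finset V) :
    Disjoint ((X.image some).offDiag.image (Function.uncurry Sym2.mk))
      (X.image (fun x => s(some x, (none : Option V)))) := by
  rw [Finset.disjoint_left]
  rintro e he he'
  obtain ⟨⟨a, b⟩, hab, rfl⟩ := Finset.mem_image.1 he
  obtain ⟨x, -, hx⟩ := Finset.mem_image.1 he'
  rw [Finset.mem_offDiag] at hab
  have : (none : Option V) ∈ (Function.uncurry Sym2.mk (a, b)) := by rw [← hx]; simp
  simp only [Function.uncurry_apply_pair, Sym2.mem_iff] at this
  rcases this with h | h
  · obtain ⟨y, -, hy⟩ := Finset.mem_image.1 hab.1; simp [← h] at hy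
  · obtain ⟨y, -, hy⟩ := Finset.mem_image.1 hab.2.1; simp [← h] at hy

omit [DecidableEq V] in
lemma inj_pend : Function.Injective (fun x : V => s(some x, (none : Option V))) := by
  intro a b h
  simp only [Sym2.eq, Sym2.rel_iff', Prod.mk.injEq, Prod.swap_prod_mk] at h
  rcases h with ⟨h, -⟩ | ⟨h, -⟩ <;> simp_all

lemma dens_clique (G : SimpleGraph V) [DecidableRel G.Adj] (α : ℝ) (w : Sym2 (Option V) → ℝ)
    (hw1 : ∀ x y : V, x ≠ y →
      w (Sym2.mk (some x) (some y)) = if G.Adj x y then 1 else 0)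
    (hw2 : ∀ x : V, w (Sym2.mk none (some x)) = α)
    (X : Finset V) (hX : G.IsClique (X : Set V)) :
    dens w (X.image some) (X.image some ∪ {none}) =
      ((X.card.choose 2 : ℝ) + α * X.card) / ((X.card.choose 2 : ℝ) + X.card) := by
  have hA_card : ((X.image some).offDiag.image (Function.uncurry Sym2.mk)).card = X.card.choose 2 := by
    rw [Sym2.card_image_offDiag, Finset.card_image_of_injective _ (Option.some_injective V)]
  have hB_card : (X.image (fun x => s(some x, (none : Option V)))).card = X.card :=
    Finset.card_image_of_injective _ inj_pend
  have hw_one : ∀ e ∈ (X.image some).offDiag.image (Function.uncurry Sym2.mk), w e = 1 := by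
    intro e he
    obtain ⟨⟨a, b⟩, hab, rfl⟩ := Finset.mem_image.1 he
    rw [Finset.mem_offDiag] at hab
    obtain ⟨x, hx, rfl⟩ := Finset.mem_image.1 hab.1
    obtain ⟨y, hy, rfl⟩ := Finset.mem_image.1 hab.2.1
    have hxy : x ≠ y := fun h => hab.2.2 (by rw [h])
    rw [Function.uncurry_apply_pair, hw1 x y hxy, if_pos (hX hx hy hxy)]
  have hsumA : ∑ e ∈ (X.image some).offDiag.image (Function.uncurry Sym2.mk), w e = (X.card.choose 2 : ℝ) := by
    rw [Finset.sum_congr rfl hw_one, Finset.sum_const, hA_card, nsmul_eq_mul, mul_one]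
  have hsumB : ∑ e ∈ X.image (fun x => s(some x, (none : Option V))), w e
      = α * X.card := by
    rw [Finset.sum_image (fun x _ y _ h => inj_pend h),
      Finset.sum_congr rfl (fun x _ => by rw [Sym2.eq_swap, hw2 x]),
      Finset.sum_const, nsmul_eq_mul, mul_comm]
  rw [dens, wsum, crossE_eq, Finset.sum_union (disj_eq X), hsumA, hsumB,
    Finset.card_union_of_disjoint (disj_eq X), hA_card, hB_card]
  push_cast
  ring_nf

lemma choose_form (α : ℝ) (k : ℕ) (hk : 1 ≤ k) :
    ((k.choose 2 : ℝ) + α * k) / ((k.choose 2 : ℝ) + k) =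
      ((k : ℝ) - 1 + 2 * α) / ((k : ℝ) + 1) := by
  have hk' : (1 : ℝ) ≤ (k : ℝ) := by exact_mod_cast hk
  rw [Nat.cast_choose_two]
  have h1 : (k : ℝ) * ((k : ℝ) - 1) / 2 + k = (k : ℝ) * ((k : ℝ) + 1) / 2 := by ring
  rw [h1]
  have h2 : (k : ℝ) * ((k : ℝ) + 1) / 2 ≠ 0 := by positivity
  have h3 : (k : ℝ) + 1 ≠ 0 := by positivity
  field_simp

end Aux

theorem stmt_15 {V : Type*} [Fintype V] [DecidableEq V]
    (G : SimpleGraph V) [DecidableRel G.Adj]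
    (α : ℝ) (hα : α = 1 - 1 / (2 * ((Fintype.card V : ℝ)) ^ 2))
    -- completed weights on `V ∪ {s}` (`s = none`): edges of `G` weigh 1,
    -- edges from `s` to each vertex weigh `α`, all other pairs weigh 0
    (w : Sym2 (Option V) → ℝ)
    (hw1 : ∀ x y : V, x ≠ y →
      w (Sym2.mk (some x) (some y)) = if G.Adj x y then 1 else 0)
    (hw2 : ∀ x : V, w (Sym2.mk none (some x)) = α)
    (X : Finset V) (hX : G.IsClique (X : Set V))
    (n : ℕ) (hn : n = X.card) (hn1 : 1 ≤ n) :
    dens w (X.image some) (X.image some ∪ {none}) =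
        ((n.choose 2 : ℝ) + α * n) / ((n.choose 2 : ℝ) + n) ∧
    dens w (X.image some) (X.image some ∪ {none}) =
        ((n : ℝ) - 1 + 2 * α) / ((n : ℝ) + 1) ∧
    -- the density is strictly increasing in the size over cliques:
    (∀ Y : Finset V, G.IsClique (Y : Set V) → X.card < Y.card →
      dens w (X.image some) (X.image some ∪ {none}) <
        dens w (Y.image some) (Y.image some ∪ {none})) := by
  subst hn
  have h1 := dens_clique G α w hw1 hw2 X hX
  have h2 := choose_form α X.card hn1
  refine ⟨h1, h1.trans h2, ?_⟩
  intro Y hY hXY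
  have hY1 : 1 ≤ Y.card := le_trans hn1 hXY.le
  have h1' := dens_clique G α w hw1 hw2 Y hY
  have h2' := choose_form α Y.card hY1
  rw [h1.trans h2, h1'.trans h2']
  -- α < 1
  have hVpos : 0 < Fintype.card V := by
    obtain ⟨x, hx⟩ := Finset.card_pos.1 hn1
    exact Fintype.card_pos_iff.2 ⟨x⟩
  have hc : (1 : ℝ) ≤ (Fintype.card V : ℝ) := by exact_mod_cast hVpos
  have hα1 : α < 1 := by
    rw [hα]
    have : 0 < 1 / (2 * ((Fintype.card V : ℝ)) ^ 2) := by positivity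
    linarith
  have hnm : ((X.card : ℝ)) < (Y.card : ℝ) := by exact_mod_cast hXY
  have hn' : (1 : ℝ) ≤ (X.card : ℝ) := by exact_mod_cast hn1
  rw [div_lt_div_iff₀ (by linarith) (by linarith)]
  nlinarith
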